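/- arXiv:2507.15805 — 3 statements merged into one kernel-verified Lean document; each statement's English description precedes it below -/
import Mathlib

section
/- For the enzyme dynamics system, the total enzyme quantity is conserved: for every t ∈ ℝ, C1(t) + E(t) = C1(0) + E(0). -/
/-- For the enzyme dynamics system, the total enzyme quantity is conserved:
for every `t : ℝ`, `C1 t + E t = C1 0 + E 0`. -/
theorem enzyme_total_enzyme_conserved
    (k1 km1 k2 : ℝ) (C1 E S P : ℝ → ℝ)
    (hC1 : ∀ t : ℝ, HasDerivAt C1 (k1 * S t * E t - (km1 + k2) * C1 t) t)
    (hE : ∀ t : ℝ, HasDerivAt E (-(k1 * S t * E t) + (km1 + k2) * C1 t) t)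
    (hS : ∀ t : ℝ, HasDerivAt S (-(k1 * S t * E t) + km1 * C1 t) t)
    (hP : ∀ t : ℝ, HasDerivAt P (k2 * C1 t) t) :
    ∀ t : ℝ, C1 t + E t = C1 0 + E 0 := by
  have h : ∀ t : ℝ, HasDerivAt (fun t => C1 t + E t) 0 t := by
    intro t
    have : HasDerivAt (fun t => C1 t + E t) _ t := (hC1 t).add (hE t)
    convert this using 1
    ring
  intro t
  exact is_const_of_deriv_eq_zero (fun t => (h t).differentiableAt)
    (fun t => (h t).deriv) t 0
end

section
/- For the enzyme dynamics system, the total substrate quantity is conserved: for every t ∈ ℝ, C1(t) + S(t) + P(t) = C1(0) + S(0) + P(0). -/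
/-- For the enzyme dynamics system, the total substrate quantity is conserved:
for every `t : ℝ`, `C1 t + S t + P t = C1 0 + S 0 + P 0`. -/
theorem enzyme_total_substrate_conserved
    (k1 km1 k2 : ℝ) (C1 E S P : ℝ → ℝ)
    (hC1 : ∀ t : ℝ, HasDerivAt C1 (k1 * S t * E t - (km1 + k2) * C1 t) t)
    (hE : ∀ t : ℝ, HasDerivAt E (-(k1 * S t * E t) + (km1 + k2) * C1 t) t)
    (hS : ∀ t : ℝ, HasDerivAt S (-(k1 * S t * E t) + km1 * C1 t) t)
    (hP : ∀ t : ℝ, HasDerivAt P (k2 * C1 t) t) :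
    ∀ t : ℝ, C1 t + S t + P t = C1 0 + S 0 + P 0 := by
  have key : ∀ t : ℝ, HasDerivAt (fun t => C1 t + S t + P t) 0 t := by
    intro t
    have h : HasDerivAt (fun t => C1 t + S t + P t) _ t := ((hC1 t).add (hS t)).add (hP t)
    convert h using 1
    ring
  intro t
  have := is_const_of_deriv_eq_zero (f := fun t => C1 t + S t + P t)
    (fun x => (key x).differentiableAt) (fun x => (key x).deriv) t 0
  simpa using this
end

section
/- For the enzyme dynamics system with initial data C1(0) = 2, E(0) = 2, S(0) = 1, P(0) = 1, the following constraint holds for all real ξ3, ξ5 and all t ∈ ℝ: (−4ξ3 − 4ξ5)·1 + (ξ3 + ξ5)·C1(t) + ξ3·E(t) + ξ5·S(t) + ξ5·P(t) = 0. -/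
/-- For the enzyme dynamics system with initial data `C1 0 = 2`, `E 0 = 2`,
`S 0 = 1`, `P 0 = 1`: for all real `ξ3, ξ5` and all `t : ℝ`,
`(−4ξ3 − 4ξ5)·1 + (ξ3 + ξ5)·C1 t + ξ3·E t + ξ5·S t + ξ5·P t = 0`. -/
theorem enzyme_constraint_initial_data_two
    (k1 km1 k2 : ℝ) (C1 E S P : ℝ → ℝ)
    (hC1 : ∀ t : ℝ, HasDerivAt C1 (k1 * S t * E t - (km1 + k2) * C1 t) t)
    (hE : ∀ t : ℝ, HasDerivAt E (-(k1 * S t * E t) + (km1 + k2) * C1 t) t)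
    (hS : ∀ t : ℝ, HasDerivAt S (-(k1 * S t * E t) + km1 * C1 t) t)
    (hP : ∀ t : ℝ, HasDerivAt P (k2 * C1 t) t)
    (hC10 : C1 0 = 2) (hE0 : E 0 = 2) (hS0 : S 0 = 1) (hP0 : P 0 = 1) :
    ∀ (ξ3 ξ5 : ℝ) (t : ℝ),
      (-4 * ξ3 - 4 * ξ5) * 1 + (ξ3 + ξ5) * C1 t + ξ3 * E t + ξ5 * S t + ξ5 * P t = 0 := by
  have h1 : ∀ t : ℝ, HasDerivAt (fun t => C1 t + E t) 0 t := by
    intro t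
    have := (hC1 t).add (hE t)
    exact this.congr_deriv (by ring)
  have h2 : ∀ t : ℝ, HasDerivAt (fun t => C1 t + S t + P t) 0 t := by
    intro t
    have := ((hC1 t).add (hS t)).add (hP t)
    exact this.congr_deriv (by ring)
  have c1 : ∀ t : ℝ, C1 t + E t = 4 := by
    intro t
    have := is_const_of_deriv_eq_zero (f := fun t => C1 t + E t)
      (fun x => (h1 x).differentiableAt) (fun x => (h1 x).deriv) t 0
    simp [hC10, hE0] at this; linarith
  have c2 : ∀ t : ℝ, C1 t + S t + P t = 4 := by
    intro t
    have := is_const_of_deriv_eq_zero (f := fun t => C1 t + S t + P t)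
      (fun x => (h2 x).differentiableAt) (fun x => (h2 x).deriv) t 0
    simp [hC10, hS0, hP0] at this; linarith
  intro ξ3 ξ5 t
  linear_combination ξ3 * c1 t + ξ5 * c2 t
end
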